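/- Let K be a number field, let f : P^1 → P^1 be a rational map of degree d ≥ 2 defined over K, and let α ∈ P^1(K). Assume that f^{−1}(α) ⊆ P^1(K). Then dim_upper(G_{f,α}) ≤ (1/d)·Σ_{β ∈ f^{−1}(α)} dim_upper(G_{f,β}), the sum running over the distinct points β of f^{−1}(α). -/

import Mathlib

open scoped Classical

noncomputable section

/-! ### Minkowski dimension machinery for groups of automorphisms of rooted trees

A rooted tree is presented by its levels `V 0, V 1, V 2, …` (with `V 0` the root level)
together with parent maps `V (n+1) → V n`.  An automorphism is a family of permutations
of the levels commuting with the parent maps; it is in particular determined by a point of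
`∀ k, Equiv.Perm (V k)`.  The restriction `r_n σ` of `σ` to the height-`n` subtree is the
tuple `(σ 0, …, σ n)`, and the natural metric is
`d(σ,τ) = inf { d!^{-(dⁿ-1)/(d-1)} : r_n σ = r_n τ }`. -/

/-- The exponent `(dⁿ - 1)/(d - 1) = 1 + d + ⋯ + d^(n-1)`. -/
def scaleExp (d n : ℕ) : ℕ := ∑ i ∈ Finset.range n, d ^ i

/-- The scale `ε_n = d!^{-(dⁿ-1)/(d-1)}`, i.e. `1/|Aut(Tₙᶜᵒᵐ)|`. -/
def treeScale (d n : ℕ) : ℝ := ((d.factorial : ℝ) ^ scaleExp d n)⁻¹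

/-- Two families of level permutations restrict to the same automorphism of the
height-`n` subtree. -/
def AgreeUpTo {V : ℕ → Type*} (n : ℕ) (σ τ : ∀ k, Equiv.Perm (V k)) : Prop :=
  ∀ k, k ≤ n → σ k = τ k

/-- The natural metric on automorphisms of a rooted `d`-ary tree:
`d(σ,τ) = inf { d!^{-(dⁿ-1)/(d-1)} : σ and τ agree on the height-n subtree }`. -/
def treeDist {V : ℕ → Type*} (d : ℕ) (σ τ : ∀ k, Equiv.Perm (V k)) : ℝ :=
  sInf {x : ℝ | ∃ n : ℕ, AgreeUpTo n σ τ ∧ x = treeScale d n}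

/-- `N_{ε_n}(G)`: the least number of balls of radius `ε_n = treeScale d n` needed to
cover `G`. -/
def coverNum {V : ℕ → Type*} (d : ℕ) (G : Set (∀ k, Equiv.Perm (V k))) (n : ℕ) : ℕ :=
  sInf {m : ℕ | ∃ s : Finset (∀ k, Equiv.Perm (V k)), s.card = m ∧
    G ⊆ ⋃ σ ∈ s, {τ | treeDist d σ τ ≤ treeScale d n}}

/-- The lower Minkowski dimension `liminf_{ε → 0} log N_ε(G) / log (1/ε)` (computed
along the scales `ε_n` of the metric). -/
def dimLower {V : ℕ → Type*} (d : ℕ) (G : Set (∀ k, Equiv.Perm (V k))) : ℝ :=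
  Filter.liminf
    (fun n : ℕ => Real.log (coverNum d G n : ℝ) / Real.log (1 / treeScale d n)) Filter.atTop

/-- The upper Minkowski dimension `limsup_{ε → 0} log N_ε(G) / log (1/ε)` (computed
along the scales `ε_n` of the metric). -/
def dimUpper {V : ℕ → Type*} (d : ℕ) (G : Set (∀ k, Equiv.Perm (V k))) : ℝ :=
  Filter.limsup
    (fun n : ℕ => Real.log (coverNum d G n : ℝ) / Real.log (1 / treeScale d n)) Filter.atTop

/-- The Minkowski dimension of `G` exists and equals `x`. -/
def HasDim {V : ℕ → Type*} (d : ℕ) (G : Set (∀ k, Equiv.Perm (V k))) (x : ℝ) : Prop :=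
  dimLower d G = x ∧ dimUpper d G = x

/-- `G` is closed for the natural metric. -/
def IsDistClosed {V : ℕ → Type*} (d : ℕ) (G : Set (∀ k, Equiv.Perm (V k))) : Prop :=
  ∀ σ, (∀ ε : ℝ, 0 < ε → ∃ τ ∈ G, treeDist d σ τ ≤ ε) → σ ∈ G

/-- The closure of `G` for the natural metric. -/
def distClosure {V : ℕ → Type*} (d : ℕ) (G : Set (∀ k, Equiv.Perm (V k))) :
    Set (∀ k, Equiv.Perm (V k)) :=
  {σ | ∀ ε : ℝ, 0 < ε → ∃ τ ∈ G, treeDist d σ τ ≤ ε}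

/-- `|r_n(G)|`: the cardinality of the restriction of `G` to the height-`n` subtree. -/
def levelCard {V : ℕ → Type*} (G : Set (∀ k, Equiv.Perm (V k))) (n : ℕ) : ℕ :=
  Nat.card ((fun (σ : ∀ k, Equiv.Perm (V k)) (k : Fin (n + 1)) => σ k.1) '' G)

end
noncomputable section

/-- A fixed algebraic closure `K̄` of `K`. -/
abbrev Kbar (K : Type*) [Field K] : Type _ := AlgebraicClosure K

/-- The level-`n` vertices of the preimage tree of `α` under `φ`: the set
`φ^{-n}(α)`. -/
abbrev preV {Pts : Type*} (φ : Pts → Pts) (α : Pts) (n : ℕ) : Type _ :=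
  {β : Pts // φ^[n] β = α}

/-- The parent map of the preimage tree: a vertex `β ∈ φ^{-(n+1)}(α)` is joined to
`φ(β) ∈ φ^{-n}(α)`. -/
def preParent {Pts : Type*} (φ : Pts → Pts) (α : Pts) (n : ℕ)
    (β : preV φ α (n + 1)) : preV φ α n :=
  ⟨φ β.1, by have h := β.2; rwa [Function.iterate_succ_apply] at h⟩

/-- The image `G_{φ,α}` of the arboreal Galois representation attached to `(φ, α)` over
the base field `L` (an intermediate field of `K̄/K`): the set of families of level
permutations of the preimage tree induced by elements of `Gal(K̄/L)`, acting on points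
via `act`. -/
def arbGal {K : Type*} [Field K] {Pts : Type*}
    (act : (Kbar K ≃ₐ[K] Kbar K) → Pts → Pts) (L : IntermediateField K (Kbar K))
    (φ : Pts → Pts) (α : Pts) : Set (∀ n, Equiv.Perm (preV φ α n)) :=
  {g | ∃ σ : Kbar K ≃ₐ[K] Kbar K, (∀ x ∈ L, σ x = x) ∧
    ∀ (n : ℕ) (β : preV φ α n), (g n β : Pts) = act σ (β : Pts)}

end
noncomputable section

/-- The projective line `ℙ¹(L) = L ∪ {∞}`, with `none` the point at infinity. -/
abbrev P1 (L : Type*) := Option L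

/-- The action on `ℙ¹(A)` of the rational map `f = p/q` with coefficients in `K`,
for an extension field `A` of `K`.  At a finite point `x` the value is `p(x)/q(x)`
(`∞` when `q(x) = 0`), and the value at `∞` is governed by the degrees of `p` and
`q` and their leading coefficients. -/
def ratAct {K : Type*} [Field K] (p q : Polynomial K)
    (A : Type*) [Field A] [Algebra K A] : P1 A → P1 A
  | some x =>
      if Polynomial.aeval x q = 0 then none
      else some (Polynomial.aeval x p / Polynomial.aeval x q)
  | none =>
      if q.natDegree < p.natDegree then none
      else if p.natDegree < q.natDegree then some 0
      else some (algebraMap K A (p.leadingCoeff / q.leadingCoeff))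

/-- The natural action of `Gal(K̄/K)` on `ℙ¹(K̄)`. -/
def galP1 {K : Type*} [Field K] (σ : Kbar K ≃ₐ[K] Kbar K) : P1 (Kbar K) → P1 (Kbar K) :=
  Option.map σ

/-- The inclusion `ℙ¹(K) ⊆ ℙ¹(K̄)`. -/
def P1K {K : Type*} [Field K] : P1 K → P1 (Kbar K) :=
  Option.map (algebraMap K (Kbar K))

/-- The set of `L`-rational points of `ℙ¹(K̄)`, for an intermediate field `L` of
`K̄/K`. -/
def P1Rat {K : Type*} [Field K] (L : IntermediateField K (Kbar K)) : Set (P1 (Kbar K)) :=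
  {β | β = none ∨ ∃ x ∈ L, β = some x}

/-- The Möbius transformation of `ℙ¹(F)` attached to `(a b; c e) ∈ PGL₂(F)`. -/
def moebius {F : Type*} [Field F] (a b c e : F) : P1 F → P1 F
  | some x => if c * x + e = 0 then none else some ((a * x + b) / (c * x + e))
  | none => if c = 0 then none else some (a / c)

/-- The normalizing constant `C_D = log(D!)/(D-1)`. -/
def Cconst (D : ℕ) : ℝ := Real.log (D.factorial : ℝ) / ((D : ℝ) - 1)

/-- The ramification multiplicity at a point `γ ∈ ℙ¹(A)` of the degree-`d` rational
map `f = p/q` with coefficients in `K ⊆ A`:  at a finite point `γ` with `f(γ) = c`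
finite it is the order of vanishing of `p - c·q` at `γ`; the cases involving `∞` are
handled using `q` and degrees.  A point is critical when this is at least `2`. -/
def multAt {K : Type*} [Field K] (p q : Polynomial K)
    (A : Type*) [Field A] [Algebra K A] (d : ℕ) : P1 A → ℕ
  | some x =>
      match ratAct p q A (some x) with
      | some c => ((p.map (algebraMap K A)) -
          Polynomial.C c * (q.map (algebraMap K A))).rootMultiplicity x
      | none => (q.map (algebraMap K A)).rootMultiplicity x
  | none =>
      match ratAct p q A none with
      | some c => d - ((p.map (algebraMap K A)) -
          Polynomial.C c * (q.map (algebraMap K A))).natDegree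
      | none => d - q.natDegree

end

noncomputable section
variable {V : ℕ → Type*} {d : ℕ}

lemma one_lt_fact (hd : 2 ≤ d) : (1:ℝ) < (d.factorial : ℝ) := by
  have : 2 ≤ d.factorial := le_trans hd (Nat.self_le_factorial d)
  exact_mod_cast lt_of_lt_of_le one_lt_two (by exact_mod_cast this)

lemma scaleExp_succ (d n : ℕ) : scaleExp d (n+1) = scaleExp d n + d ^ n :=
  Finset.sum_range_succ _ _

lemma scaleExp_strictMono (hd : 2 ≤ d) : StrictMono (scaleExp d) := by
  apply strictMono_nat_of_lt_succ
  intro n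
  rw [scaleExp_succ]
  have : 0 < d ^ n := Nat.pow_pos (by omega)
  omega

lemma scaleExp_pos (hd : 2 ≤ d) {n : ℕ} (hn : 1 ≤ n) : 0 < scaleExp d n := by
  have := scaleExp_strictMono hd (show 0 < n from hn)
  simpa [scaleExp] using this

lemma treeScale_pos (d n : ℕ) : 0 < treeScale d n := by
  have h : (0:ℝ) < (d.factorial : ℝ) := by exact_mod_cast d.factorial_pos
  simp only [treeScale]
  positivity

lemma treeScale_lt (hd : 2 ≤ d) {m n : ℕ} (h : m < n) : treeScale d n < treeScale d m := by
  apply inv_strictAnti₀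
  · positivity
  · exact pow_lt_pow_right₀ (one_lt_fact hd) (scaleExp_strictMono hd h)

lemma treeScale_anti (hd : 2 ≤ d) {m n : ℕ} (h : m ≤ n) : treeScale d n ≤ treeScale d m := by
  rcases lt_or_eq_of_le h with h | h
  · exact (treeScale_lt hd h).le
  · subst h; rfl

lemma treeScale_zero (d : ℕ) : treeScale d 0 = 1 := by simp [treeScale, scaleExp]

lemma agree_zero [Subsingleton (V 0)] (σ τ : ∀ k, Equiv.Perm (V k)) : AgreeUpTo 0 σ τ := by
  intro k hk
  interval_cases k
  · exact Equiv.ext fun x => Subsingleton.elim _ _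

lemma agree_mono {σ τ : ∀ k, Equiv.Perm (V k)} {m n : ℕ} (h : AgreeUpTo n σ τ) (hmn : m ≤ n) :
    AgreeUpTo m σ τ := fun k hk => h k (hk.trans hmn)

lemma treeDist_le_iff (hd : 2 ≤ d) [Subsingleton (V 0)] (σ τ : ∀ k, Equiv.Perm (V k)) (n : ℕ) :
    treeDist d σ τ ≤ treeScale d n ↔ AgreeUpTo n σ τ := by
  constructor
  · intro h
    by_contra hn
    have hn1 : 1 ≤ n := by
      rcases Nat.eq_zero_or_pos n with h0 | h1
      · exact absurd (h0 ▸ agree_zero σ τ) (h0 ▸ hn)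
      · exact h1
    have hlow : treeScale d (n-1) ≤ treeDist d σ τ := by
      apply le_csInf ⟨treeScale d 0, Set.mem_setOf.mpr ⟨0, agree_zero σ τ, rfl⟩⟩
      rintro x ⟨m, hm, rfl⟩
      have hmn : m < n := by
        by_contra hge
        exact hn (agree_mono hm (le_of_not_gt hge))
      exact treeScale_anti hd (by omega)
    have := lt_of_le_of_lt h (treeScale_lt hd (show n - 1 < n by omega))
    linarith
  · intro h
    apply csInf_le
    · exact ⟨0, by rintro x ⟨m, _, rfl⟩; exact (treeScale_pos _ _).le⟩
    · exact ⟨n, h, rfl⟩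

lemma agree_iff_restrict_eq {σ τ : ∀ k, Equiv.Perm (V k)} {n : ℕ} :
    AgreeUpTo n σ τ ↔ (fun k : Fin (n+1) => σ k.1) = (fun k : Fin (n+1) => τ k.1) := by
  constructor
  · intro h; funext k; exact h k.1 (by omega)
  · intro h k hk
    have := congrFun h ⟨k, by omega⟩
    simpa using this

lemma coverNum_eq (hd : 2 ≤ d) [Subsingleton (V 0)] [∀ k, Finite (V k)]
    (G : Set (∀ k, Equiv.Perm (V k))) (n : ℕ) :
    coverNum d G n = Nat.card ((fun (σ : ∀ k, Equiv.Perm (V k)) (k : Fin (n + 1)) => σ k.1) '' G) := by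
  set R : (∀ k, Equiv.Perm (V k)) → (∀ k : Fin (n+1), Equiv.Perm (V k.1)) :=
    fun σ k => σ k.1 with hR
  set I : Set (∀ k : Fin (n+1), Equiv.Perm (V k.1)) := R '' G with hI
  haveI : Finite (∀ k : Fin (n+1), Equiv.Perm (V k.1)) := by infer_instance
  haveI : Fintype I := Fintype.ofFinite _
  -- representatives
  have hrep : ∀ t : I, ∃ g, g ∈ G ∧ R g = t.1 := fun t => t.2
  choose rep hrepG hrepR using hrep
  have hrepinj : Function.Injective rep := by
    intro a b hab
    apply Subtype.ext
    rw [← hrepR a, ← hrepR b, hab]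
  set s : Finset (∀ k, Equiv.Perm (V k)) := Finset.univ.image rep with hs
  have hscard : s.card = Nat.card I := by
    rw [hs, Finset.card_image_of_injective _ hrepinj, Nat.card_eq_fintype_card]
    simp
  have hscov : G ⊆ ⋃ σ ∈ s, {τ | treeDist d σ τ ≤ treeScale d n} := by
    intro τ hτ
    have htI : R τ ∈ I := ⟨τ, hτ, rfl⟩
    refine Set.mem_iUnion₂.mpr ⟨rep ⟨R τ, htI⟩, ?_, ?_⟩
    · exact Finset.mem_image_of_mem _ (Finset.mem_univ _)
    · refine (treeDist_le_iff hd _ _ n).mpr ?_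
      rw [agree_iff_restrict_eq]
      exact hrepR ⟨R τ, htI⟩
  have hmem : Nat.card I ∈ {m : ℕ | ∃ s : Finset (∀ k, Equiv.Perm (V k)), s.card = m ∧
      G ⊆ ⋃ σ ∈ s, {τ | treeDist d σ τ ≤ treeScale d n}} := ⟨s, hscard, hscov⟩
  have hlb : ∀ m ∈ {m : ℕ | ∃ s : Finset (∀ k, Equiv.Perm (V k)), s.card = m ∧
      G ⊆ ⋃ σ ∈ s, {τ | treeDist d σ τ ≤ treeScale d n}}, Nat.card I ≤ m := by
    rintro m ⟨t, ht, hcov⟩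
    have hsub : I ⊆ R '' ↑t := by
      rintro x ⟨g, hg, rfl⟩
      obtain ⟨c, hc⟩ := Set.mem_iUnion₂.mp (hcov hg)
      obtain ⟨hcs, hdist⟩ := hc
      have hag := (treeDist_le_iff hd c g n).mp hdist
      rw [agree_iff_restrict_eq] at hag
      exact ⟨c, hcs, hag⟩
    have h1 : Nat.card I ≤ Nat.card (R '' (↑t : Set _) : Set _) :=
      Nat.card_mono (t.finite_toSet.image R) hsub
    have h2 := Nat.card_image_le (f := R) t.finite_toSet
    have h3 : Nat.card (↑t : Set ((k : ℕ) → Equiv.Perm (V k))) = t.card := by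
      rw [Nat.card_coe_set_eq, Set.ncard_coe_finset]
    rw [← ht, ← h3]
    exact le_trans h1 h2
  have : coverNum d G n = sInf _ := rfl
  apply le_antisymm
  · exact Nat.sInf_le hmem
  · exact hlb _ (Nat.sInf_mem ⟨_, hmem⟩)

-- generic fiber counting
lemma finite_card_le_of_fibers {X Y : Type*} [Finite Y] (f : X → Y) (m : ℕ)
    (hfin : ∀ y, Finite {x : X // f x = y}) (hcard : ∀ y, Nat.card {x : X // f x = y} ≤ m) :
    Finite X ∧ Nat.card X ≤ Nat.card Y * m := by
  haveI := hfin
  have e : ∀ y, {x : X // f x = y} ↪ Fin m := fun y =>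
    ((Finite.equivFinOfCardEq (rfl : Nat.card {x : X // f x = y} = _)).toEmbedding).trans
      (Fin.castLEEmb (hcard y))
  set u : X → Fin m := fun x => e (f x) ⟨x, rfl⟩ with hu
  have hue : ∀ (a : X) (y) (h : f a = y), e y ⟨a, h⟩ = u a := by
    intro a y h; subst h; rfl
  have hinj : Function.Injective (fun x => (f x, u x)) := by
    intro x x' h
    have h1 : f x = f x' := congrArg Prod.fst h
    have h2 : u x = u x' := congrArg Prod.snd h
    have := (e (f x')).injective (a₁ := ⟨x, h1⟩) (a₂ := ⟨x', rfl⟩)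
      (by rw [hue x (f x') h1, hue x' (f x') rfl]; exact h2)
    exact congrArg Subtype.val this
  haveI hX : Finite X := Finite.of_injective _ hinj
  refine ⟨hX, ?_⟩
  calc Nat.card X ≤ Nat.card (Y × Fin m) := Nat.card_le_card_of_injective _ hinj
    _ = Nat.card Y * m := by simp [Nat.card_prod]

end

section Concrete
variable {K : Type*} [Field K] {d : ℕ}

instance preV_zero_subsingleton {Pts : Type*} (φ : Pts → Pts) (a : Pts) :
    Subsingleton (preV φ a 0) :=
  ⟨fun x y => Subtype.ext (by
    have hx := x.2; have hy := y.2
    simp only [Function.iterate_zero, id_eq] at hx hy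
    rw [hx, hy])⟩

lemma ratAct_comm (p q : Polynomial K) (σ : Kbar K ≃ₐ[K] Kbar K) (x : P1 (Kbar K)) :
    ratAct p q (Kbar K) (galP1 σ x) = galP1 σ (ratAct p q (Kbar K) x) := by
  cases x with
  | none =>
    show ratAct p q (Kbar K) none = galP1 σ (ratAct p q (Kbar K) none)
    unfold ratAct
    split_ifs <;> simp [galP1, AlgEquiv.commutes]
  | some y =>
    have key : ∀ r : Polynomial K, Polynomial.aeval (σ y) r = σ (Polynomial.aeval y r) :=
      fun r => Polynomial.aeval_algHom_apply (σ : Kbar K →ₐ[K] Kbar K) y r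
    show ratAct p q (Kbar K) (some (σ y)) = galP1 σ (ratAct p q (Kbar K) (some y))
    by_cases h : Polynomial.aeval y q = 0
    · have h' : Polynomial.aeval (σ y) q = 0 := by rw [key, h, map_zero]
      simp [ratAct, h, h', galP1]
    · have h' : Polynomial.aeval (σ y) q ≠ 0 := by
        rw [key]
        exact fun hc => h (by simpa using congrArg σ.symm hc)
      simp [ratAct, h, h', galP1, key, map_div₀]

lemma galP1_symm_cancel (σ : Kbar K ≃ₐ[K] Kbar K) (x : P1 (Kbar K)) :
    galP1 σ.symm (galP1 σ x) = x := by
  cases x <;> simp [galP1]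

lemma galP1_cancel_symm (σ : Kbar K ≃ₐ[K] Kbar K) (x : P1 (Kbar K)) :
    galP1 σ (galP1 σ.symm x) = x := by
  cases x <;> simp [galP1]

lemma iterate_ratAct_galP1 (p q : Polynomial K) (σ : Kbar K ≃ₐ[K] Kbar K) (k : ℕ)
    (x : P1 (Kbar K)) :
    (ratAct p q (Kbar K))^[k] (galP1 σ x) = galP1 σ ((ratAct p q (Kbar K))^[k] x) := by
  induction k generalizing x with
  | zero => simp
  | succ k ih =>
    rw [Function.iterate_succ_apply, Function.iterate_succ_apply, ratAct_comm, ih]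

/-- The family of level permutations of the preimage tree of `a` induced by `σ`,
when `σ` fixes `a`. -/
noncomputable def gPerm (p q : Polynomial K) (σ : Kbar K ≃ₐ[K] Kbar K) (a : P1 (Kbar K))
    (ha : galP1 σ a = a) (k : ℕ) : Equiv.Perm (preV (ratAct p q (Kbar K)) a k) where
  toFun γ := ⟨galP1 σ γ.1, by rw [iterate_ratAct_galP1, γ.2, ha]⟩
  invFun γ := ⟨galP1 σ.symm γ.1, by
    rw [iterate_ratAct_galP1, γ.2]
    conv_lhs => rw [← ha]
    exact galP1_symm_cancel σ a⟩
  left_inv γ := Subtype.ext (galP1_symm_cancel σ γ.1)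
  right_inv γ := Subtype.ext (galP1_cancel_symm σ γ.1)

lemma gPerm_mem (p q : Polynomial K) (σ : Kbar K ≃ₐ[K] Kbar K) (a : P1 (Kbar K))
    (ha : galP1 σ a = a) :
    (fun k => gPerm p q σ a ha k) ∈ arbGal (K := K) galP1 ⊥ (ratAct p q (Kbar K)) a := by
  refine ⟨σ, ?_, fun n β => rfl⟩
  intro x hx
  obtain ⟨y, hy⟩ := IntermediateField.mem_bot.mp hx
  rw [← hy]
  exact σ.commutes y

lemma galP1_fix_of_rat (σ : Kbar K ≃ₐ[K] Kbar K) {β : P1 (Kbar K)}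
    (hβ : β ∈ P1Rat (K := K) ⊥) : galP1 σ β = β := by
  rcases hβ with h | ⟨x, hx, h⟩
  · rw [h]; rfl
  · obtain ⟨y, hy⟩ := IntermediateField.mem_bot.mp hx
    rw [h, ← hy]
    simp [galP1, AlgEquiv.commutes]

end Concrete

section Fibers
variable {K : Type*} [Field K] {d : ℕ}

open Polynomial

lemma pq_ne_zero {p q : Polynomial K} (hd : 2 ≤ d) (hf : IsCoprime p q)
    (hdeg : max p.natDegree q.natDegree = d) : p ≠ 0 ∧ q ≠ 0 := by
  constructor
  · intro h
    have : IsUnit q := by simpa [h, isCoprime_zero_left] using hf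
    have hq0 : q.natDegree = 0 := natDegree_eq_zero_of_isUnit this
    rw [h] at hdeg
    simp [hq0] at hdeg
    omega
  · intro h
    have : IsUnit p := by simpa [h, isCoprime_zero_right] using hf
    have hp0 : p.natDegree = 0 := natDegree_eq_zero_of_isUnit this
    rw [h] at hdeg
    simp [hp0] at hdeg
    omega

lemma fiber_bound (hd : 2 ≤ d) (p q : Polynomial K) (hf : IsCoprime p q)
    (hdeg : max p.natDegree q.natDegree = d) (t : P1 (Kbar K)) :
    ∃ T : Finset (P1 (Kbar K)),
      (∀ β, ratAct p q (Kbar K) β = t → β ∈ T) ∧ T.card ≤ d := by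
  obtain ⟨hp0, hq0⟩ := pq_ne_zero hd hf hdeg
  set F := algebraMap K (Kbar K) with hF
  have hFinj : Function.Injective F := (algebraMap K (Kbar K)).injective
  set mp := p.map F with hmp
  set mq := q.map F with hmqdef
  have hmp0 : mp ≠ 0 := (Polynomial.map_ne_zero_iff hFinj).mpr hp0
  have hmq0 : mq ≠ 0 := (Polynomial.map_ne_zero_iff hFinj).mpr hq0
  have hdp : mp.natDegree = p.natDegree := natDegree_map_eq_of_injective hFinj p
  have hdq : mq.natDegree = q.natDegree := natDegree_map_eq_of_injective hFinj q
  have hev : ∀ (r : Polynomial K) (x : Kbar K), (r.map F).eval x = Polynomial.aeval x r :=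
    fun r x => by rw [Polynomial.eval_map, Polynomial.aeval_def]
  have himg_card : ∀ r : Polynomial (Kbar K), r ≠ 0 →
      (r.roots.toFinset.image some : Finset (P1 (Kbar K))).card ≤ r.natDegree := by
    intro r hr
    calc (r.roots.toFinset.image some).card ≤ r.roots.toFinset.card := Finset.card_image_le
      _ ≤ Multiset.card r.roots := r.roots.toFinset_card_le
      _ ≤ r.natDegree := Polynomial.card_roots' r
  cases t with
  | none =>
    by_cases hqp : q.natDegree < p.natDegree
    · refine ⟨insert none (mq.roots.toFinset.image some), ?_, ?_⟩
      · rintro (_ | x) hβ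
        · exact Finset.mem_insert_self _ _
        · have hx : Polynomial.aeval x q = 0 := by
            by_contra hne
            simp [ratAct, hne] at hβ
          refine Finset.mem_insert_of_mem ?_
          refine Finset.mem_image_of_mem some ?_
          rw [Multiset.mem_toFinset, Polynomial.mem_roots hmq0]
          rw [Polynomial.IsRoot, hev q x, hx]
      · have hpd : p.natDegree = d := by omega
        calc (insert none (mq.roots.toFinset.image some)).card
            ≤ (mq.roots.toFinset.image some).card + 1 := Finset.card_insert_le _ _
          _ ≤ mq.natDegree + 1 := by have := himg_card mq hmq0; omega
          _ ≤ d := by rw [hdq]; omega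
    · refine ⟨mq.roots.toFinset.image some, ?_, ?_⟩
      · rintro (_ | x) hβ
        · revert hβ
          simp only [ratAct, hqp, if_false]
          split_ifs <;> simp
        · have hx : Polynomial.aeval x q = 0 := by
            by_contra hne
            simp [ratAct, hne] at hβ
          refine Finset.mem_image_of_mem some ?_
          rw [Multiset.mem_toFinset, Polynomial.mem_roots hmq0]
          rw [Polynomial.IsRoot, hev q x, hx]
      · have := himg_card mq hmq0
        have : mq.natDegree ≤ d := by rw [hdq]; omega
        omega
  | some c =>
    set r := mp - Polynomial.C c * mq with hrdef
    have hr0 : r ≠ 0 := by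
      intro h
      have heq : mp = Polynomial.C c * mq := by
        have := sub_eq_zero.mp h
        exact this
      have hcop : IsCoprime mp mq := hf.map (Polynomial.mapRingHom F)
      have hdvd : mq ∣ mp := ⟨Polynomial.C c, by rw [heq]; ring⟩
      have hu : IsUnit mq := hcop.isUnit_of_dvd' hdvd dvd_rfl
      have hq0' : mq.natDegree = 0 := natDegree_eq_zero_of_isUnit hu
      have hple : (Polynomial.C c * mq).natDegree ≤ 0 := by
        apply le_trans Polynomial.natDegree_mul_le
        simp [hq0']
      have hp0' : mp.natDegree = 0 := by rw [heq]; omega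
      rw [hdp] at hp0'
      rw [hdq] at hq0'
      omega
    have hroot : ∀ x : Kbar K, ratAct p q (Kbar K) (some x) = some c →
        (some x : P1 (Kbar K)) ∈ (r.roots.toFinset.image some : Finset (P1 (Kbar K))) := by
      intro x hβ
      by_cases hne : Polynomial.aeval x q = 0
      · simp [ratAct, hne] at hβ
      · have hval : Polynomial.aeval x p / Polynomial.aeval x q = c := by
          have := hβ
          simp [ratAct, hne] at this
          exact this
        have hpx : Polynomial.aeval x p = c * Polynomial.aeval x q := by
          field_simp at hval
          linear_combination hval
        refine Finset.mem_image_of_mem some ?_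
        rw [Multiset.mem_toFinset, Polynomial.mem_roots hr0]
        show r.eval x = 0
        rw [hrdef]
        simp [hev p x, hev q x, hpx]
        rw [hmp, hmqdef, hev p x, hev q x, hpx, sub_self]
    have hrle : r.natDegree ≤ d := by
      apply le_trans (Polynomial.natDegree_sub_le _ _)
      have h1 : mp.natDegree ≤ d := by rw [hdp]; omega
      have h2 : (Polynomial.C c * mq).natDegree ≤ d := by
        apply le_trans Polynomial.natDegree_mul_le
        simp only [Polynomial.natDegree_C, zero_add]
        rw [hdq]; omega
      omega
    by_cases hnone : ratAct p q (Kbar K) none = (some c : P1 (Kbar K))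
    · refine ⟨insert none (r.roots.toFinset.image some), ?_, ?_⟩
      · rintro (_ | x) hβ
        · exact Finset.mem_insert_self _ _
        · exact Finset.mem_insert_of_mem (hroot x hβ)
      · -- need natDegree r ≤ d - 1
        have hrd : r.natDegree ≤ d - 1 := by
          by_cases hqp : q.natDegree < p.natDegree
          · simp [ratAct, hqp] at hnone
          · by_cases hpq : p.natDegree < q.natDegree
            · have hc0 : c = 0 := by
                simp [ratAct, hqp, hpq] at hnone
                exact hnone.symm
              have : r = mp := by rw [hrdef, hc0]; simp
              rw [this, hdp]
              omega
            · -- equal degrees, both = d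
              have hpd : p.natDegree = d := by omega
              have hqd : q.natDegree = d := by omega
              have hc : c = F p.leadingCoeff / F q.leadingCoeff := by
                simp [ratAct, hqp, hpq] at hnone
                exact hnone.symm
              have hcoeff : r.coeff d = 0 := by
                have e1 : mp.coeff d = F p.leadingCoeff := by
                  rw [hmp, Polynomial.coeff_map, ← hpd]; rfl
                have e2 : mq.coeff d = F q.leadingCoeff := by
                  rw [hmqdef, Polynomial.coeff_map, ← hqd]; rfl
                have hlq : F q.leadingCoeff ≠ 0 := fun h =>
                  (Polynomial.leadingCoeff_ne_zero.mpr hq0) (hFinj (by simpa using h))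
                rw [hrdef, Polynomial.coeff_sub, Polynomial.coeff_C_mul, e1, e2, hc,
                  div_mul_cancel₀ _ hlq, sub_self]
              by_contra hgt
              have hrd2 : r.natDegree = d := by omega
              have : r.leadingCoeff = 0 := by
                rw [Polynomial.leadingCoeff, hrd2]; exact hcoeff
              exact hr0 (Polynomial.leadingCoeff_eq_zero.mp this)
        calc (insert none (r.roots.toFinset.image some)).card
            ≤ (r.roots.toFinset.image some).card + 1 := Finset.card_insert_le _ _
          _ ≤ r.natDegree + 1 := by have := himg_card r hr0; omega
          _ ≤ d := by omega
    · refine ⟨r.roots.toFinset.image some, ?_, ?_⟩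
      · rintro (_ | x) hβ
        · exact absurd hβ hnone
        · exact hroot x hβ
      · exact le_trans (himg_card r hr0) hrle

end Fibers

section PreVCount
variable {K : Type*} [Field K] {d : ℕ}

lemma fiber_fin (hd : 2 ≤ d) (p q : Polynomial K) (hf : IsCoprime p q)
    (hdeg : max p.natDegree q.natDegree = d) (t : P1 (Kbar K)) :
    Finite {β : P1 (Kbar K) // ratAct p q (Kbar K) β = t} ∧
      Nat.card {β : P1 (Kbar K) // ratAct p q (Kbar K) β = t} ≤ d := by
  obtain ⟨T, hmem, hcard⟩ := fiber_bound hd p q hf hdeg t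
  have inj : Function.Injective
      (fun β : {β : P1 (Kbar K) // ratAct p q (Kbar K) β = t} => (⟨β.1, hmem β.1 β.2⟩ : {x // x ∈ T})) := by
    intro a b hab
    simp only [Subtype.mk.injEq] at hab
    exact Subtype.ext hab
  haveI : Finite {β : P1 (Kbar K) // ratAct p q (Kbar K) β = t} := Finite.of_injective _ inj
  refine ⟨this, ?_⟩
  calc Nat.card {β : P1 (Kbar K) // ratAct p q (Kbar K) β = t} ≤ Nat.card {x // x ∈ T} :=
        Nat.card_le_card_of_injective _ inj
    _ = T.card := Nat.card_eq_finsetCard T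
    _ ≤ d := hcard


lemma preParent_fiber (hd : 2 ≤ d) (p q : Polynomial K) (hf : IsCoprime p q)
    (hdeg : max p.natDegree q.natDegree = d) (a : P1 (Kbar K)) (n : ℕ)
    (v : preV (ratAct p q (Kbar K)) a n) :
    Finite {γ : preV (ratAct p q (Kbar K)) a (n+1) //
        preParent (ratAct p q (Kbar K)) a n γ = v} ∧
      Nat.card {γ : preV (ratAct p q (Kbar K)) a (n+1) //
        preParent (ratAct p q (Kbar K)) a n γ = v} ≤ d := by
  obtain ⟨hfin', hcard'⟩ := fiber_fin hd p q hf hdeg (v.1 : P1 (Kbar K))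
  haveI := hfin'
  set emb := (fun γ : {γ : preV (ratAct p q (Kbar K)) a (n+1) //
        preParent (ratAct p q (Kbar K)) a n γ = v} =>
        (⟨γ.1.1, congrArg Subtype.val γ.2⟩ :
          {β : P1 (Kbar K) // ratAct p q (Kbar K) β = v.1})) with hemb
  have inj : Function.Injective emb := by
    intro x y hxy
    rw [hemb] at hxy
    simp only [Subtype.mk.injEq] at hxy
    have hxy' := congrArg Subtype.val hxy
    exact Subtype.ext (Subtype.ext hxy')
  exact ⟨Finite.of_injective emb inj, le_trans (Nat.card_le_card_of_injective emb inj) hcard'⟩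

lemma preV_fin (hd : 2 ≤ d) (p q : Polynomial K) (hf : IsCoprime p q)
    (hdeg : max p.natDegree q.natDegree = d) (a : P1 (Kbar K)) (n : ℕ) :
    Finite (preV (ratAct p q (Kbar K)) a n) ∧
      Nat.card (preV (ratAct p q (Kbar K)) a n) ≤ d ^ n := by
  induction n with
  | zero =>
    haveI : Subsingleton (preV (ratAct p q (Kbar K)) a 0) := inferInstance
    refine ⟨Finite.of_subsingleton, ?_⟩
    simpa using (Nat.card_le_one_iff_subsingleton _).mpr this
  | succ n ih =>
    obtain ⟨hfin, hcard⟩ := ih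
    haveI := hfin
    set φ := ratAct p q (Kbar K)
    have hfib := preParent_fiber hd p q hf hdeg a n
    obtain ⟨hX, hXcard⟩ := finite_card_le_of_fibers (preParent φ a n) d
      (fun v => (hfib v).1) (fun v => (hfib v).2)
    refine ⟨hX, ?_⟩
    calc Nat.card (preV φ a (n+1)) ≤ Nat.card (preV φ a n) * d := hXcard
      _ ≤ d ^ n * d := Nat.mul_le_mul_right d hcard
      _ = d ^ (n+1) := (pow_succ d n).symm

end PreVCount

section LevelCard
variable {K : Type*} [Field K] {d : ℕ}

/-- Restriction of a family of level permutations to levels `0,…,n`. -/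
def Rmap {Pts : Type*} (φ : Pts → Pts) (a : Pts) (n : ℕ)
    (σ : ∀ k, Equiv.Perm (preV φ a k)) (k : Fin (n+1)) : Equiv.Perm (preV φ a k.1) :=
  σ k.1

/-- The set of height-`n` restrictions of the arboreal Galois group. -/
def Iset (p q : Polynomial K) (a : P1 (Kbar K)) (n : ℕ) :
    Set (∀ k : Fin (n+1), Equiv.Perm (preV (ratAct p q (Kbar K)) a k.1)) :=
  Rmap (ratAct p q (Kbar K)) a n '' arbGal (K := K) galP1 ⊥ (ratAct p q (Kbar K)) a

lemma arbGal_nonempty (p q : Polynomial K) (a : P1 (Kbar K)) :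
    (arbGal (K := K) galP1 ⊥ (ratAct p q (Kbar K)) a).Nonempty := by
  have ha : galP1 (AlgEquiv.refl : Kbar K ≃ₐ[K] Kbar K) a = a := by
    cases a <;> simp [galP1]
  exact ⟨fun k => gPerm p q AlgEquiv.refl a ha k, gPerm_mem p q AlgEquiv.refl a ha⟩

lemma arbGal_compat (p q : Polynomial K) {a : P1 (Kbar K)}
    {g : ∀ k, Equiv.Perm (preV (ratAct p q (Kbar K)) a k)}
    (hg : g ∈ arbGal (K := K) galP1 ⊥ (ratAct p q (Kbar K)) a) (k : ℕ)
    (γ : preV (ratAct p q (Kbar K)) a (k+1)) :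
    preParent (ratAct p q (Kbar K)) a k (g (k+1) γ) =
      g k (preParent (ratAct p q (Kbar K)) a k γ) := by
  obtain ⟨σ, -, hσ⟩ := hg
  apply Subtype.ext
  show ratAct p q (Kbar K) ((g (k+1) γ : P1 (Kbar K))) =
    (g k (preParent (ratAct p q (Kbar K)) a k γ) : P1 (Kbar K))
  rw [hσ, hσ]
  exact ratAct_comm p q σ γ.1

lemma Iset_zero_subsingleton (p q : Polynomial K) (a : P1 (Kbar K)) :
    (Iset p q a 0).Subsingleton := by
  rintro t ⟨g, -, rfl⟩ t' ⟨g', -, rfl⟩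
  funext k
  have hk : k = ⟨0, Nat.zero_lt_one⟩ := Fin.ext (by omega)
  subst hk
  exact Subsingleton.elim _ _

lemma Iset_card_le_succ (hd : 2 ≤ d) (p q : Polynomial K) (hf : IsCoprime p q)
    (hdeg : max p.natDegree q.natDegree = d) (a : P1 (Kbar K)) (n : ℕ) :
    Nat.card (Iset p q a (n+1)) ≤ Nat.card (Iset p q a n) * d ^ d ^ (n+1) := by
  set φ := ratAct p q (Kbar K) with hφ
  haveI hfinV : ∀ k, Finite (preV φ a k) := fun k => (preV_fin hd p q hf hdeg a k).1
  haveI : Finite (Iset p q a (n+1)) := Set.toFinite _ |>.to_subtype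
  haveI : Finite (Iset p q a n) := Set.toFinite _ |>.to_subtype
  have htr : ∀ t ∈ Iset p q a (n+1),
      (fun k : Fin (n+1) => t k.castSucc) ∈ Iset p q a n := by
    rintro t ⟨g, hg, rfl⟩
    exact ⟨g, hg, rfl⟩
  set f : Iset p q a (n+1) → Iset p q a n :=
    fun t => ⟨fun k : Fin (n+1) => t.1 k.castSucc, htr t.1 t.2⟩ with hfdef
  have key := finite_card_le_of_fibers f (d ^ d ^ (n+1))
    (fun s => Subtype.finite) ?_
  · exact le_trans key.2 (le_of_eq rfl)
  intro s
  set bmap : preV φ a (n+1) → preV φ a n :=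
    fun γ => s.1 ⟨n, n.lt_succ_self⟩ (preParent φ a n γ) with hbmap
  have hEpf : ∀ (t : {t : Iset p q a (n+1) // f t = s}) (γ : preV φ a (n+1)),
      preParent φ a n (t.1.1 (Fin.last (n+1)) γ) = bmap γ := by
    rintro ⟨⟨t, ht⟩, hts⟩ γ
    show preParent φ a n (t (Fin.last (n+1)) γ) = s.1 ⟨n, n.lt_succ_self⟩ (preParent φ a n γ)
    obtain ⟨g, hg, hR⟩ := ht
    have h1 : t (Fin.last (n+1)) = g (n+1) := by rw [← hR]; rfl
    have h2 : s.1 ⟨n, n.lt_succ_self⟩ = g n := by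
      rw [← hts]
      show (fun k : Fin (n+1) => t k.castSucc) ⟨n, n.lt_succ_self⟩ = g n
      rw [← hR]; rfl
    rw [h1, h2]
    exact arbGal_compat p q hg n γ
  set E : {t : Iset p q a (n+1) // f t = s} →
      ∀ γ : preV φ a (n+1), {δ : preV φ a (n+1) // preParent φ a n δ = bmap γ} :=
    fun t γ => ⟨t.1.1 (Fin.last (n+1)) γ, hEpf t γ⟩ with hEdef
  have hEinj : Function.Injective E := by
    rintro ⟨⟨t, ht⟩, hts⟩ ⟨⟨t', ht'⟩, hts'⟩ hE
    apply Subtype.ext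
    apply Subtype.ext
    funext k
    refine Fin.lastCases ?_ ?_ k
    · apply Equiv.ext
      intro γ
      have := congrFun hE γ
      simp only [hEdef] at this
      exact congrArg Subtype.val this
    · intro j
      have : f ⟨t, ht⟩ = f ⟨t', ht'⟩ := hts.trans hts'.symm
      have h2 := congrArg Subtype.val this
      exact congrFun h2 j
  haveI : ∀ γ : preV φ a (n+1),
      Finite {δ : preV φ a (n+1) // preParent φ a n δ = bmap γ} :=
    fun γ => (preParent_fiber hd p q hf hdeg a n (bmap γ)).1
  haveI := Fintype.ofFinite (preV φ a (n+1))
  calc Nat.card {t : Iset p q a (n+1) // f t = s}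
      ≤ Nat.card (∀ γ : preV φ a (n+1), {δ : preV φ a (n+1) // preParent φ a n δ = bmap γ}) :=
        Nat.card_le_card_of_injective E hEinj
    _ = ∏ γ : preV φ a (n+1),
          Nat.card {δ : preV φ a (n+1) // preParent φ a n δ = bmap γ} := Nat.card_pi
    _ ≤ ∏ _γ : preV φ a (n+1), d :=
        Finset.prod_le_prod' (fun γ _ => (preParent_fiber hd p q hf hdeg a n (bmap γ)).2)
    _ = d ^ Fintype.card (preV φ a (n+1)) := by rw [Finset.prod_const, Finset.card_univ]
    _ ≤ d ^ d ^ (n+1) := by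
        apply Nat.pow_le_pow_right (by omega)
        rw [← Nat.card_eq_fintype_card]
        exact (preV_fin hd p q hf hdeg a (n+1)).2

lemma Iset_card_le (hd : 2 ≤ d) (p q : Polynomial K) (hf : IsCoprime p q)
    (hdeg : max p.natDegree q.natDegree = d) (a : P1 (Kbar K)) (n : ℕ) :
    Nat.card (Iset p q a n) ≤ d ^ (d * scaleExp d n) := by
  induction n with
  | zero =>
    haveI : Finite (Iset p q a 0) := by
      haveI : ∀ k, Finite (preV (ratAct p q (Kbar K)) a k) :=
        fun k => (preV_fin hd p q hf hdeg a k).1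
      exact Set.toFinite _ |>.to_subtype
    have h1 : Nat.card (Iset p q a 0) ≤ 1 := by
      rw [Finite.card_le_one_iff_subsingleton]
      exact (Iset_zero_subsingleton p q a).coe_sort
    calc Nat.card (Iset p q a 0) ≤ 1 := h1
      _ ≤ d ^ (d * scaleExp d 0) := Nat.one_le_pow _ _ (by omega)
  | succ n ih =>
    calc Nat.card (Iset p q a (n+1))
        ≤ Nat.card (Iset p q a n) * d ^ d ^ (n+1) := Iset_card_le_succ hd p q hf hdeg a n
      _ ≤ d ^ (d * scaleExp d n) * d ^ d ^ (n+1) := Nat.mul_le_mul_right _ ih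
      _ = d ^ (d * scaleExp d (n+1)) := by
          rw [← pow_add]
          congr 1
          rw [scaleExp_succ]
          ring

lemma Iset_card_pos (hd : 2 ≤ d) (p q : Polynomial K) (hf : IsCoprime p q)
    (hdeg : max p.natDegree q.natDegree = d) (a : P1 (Kbar K)) (n : ℕ) :
    1 ≤ Nat.card (Iset p q a n) := by
  haveI : ∀ k, Finite (preV (ratAct p q (Kbar K)) a k) :=
    fun k => (preV_fin hd p q hf hdeg a k).1
  haveI : Finite (Iset p q a n) := Set.toFinite _ |>.to_subtype
  haveI : Nonempty (Iset p q a n) := by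
    obtain ⟨g, hg⟩ := arbGal_nonempty p q a
    exact ⟨⟨Rmap _ a n g, g, hg, rfl⟩⟩
  exact Nat.card_pos

end LevelCard

section CrossTree
variable {K : Type*} [Field K] {d : ℕ}

lemma Iset_card_cross (hd : 2 ≤ d) (p q : Polynomial K) (hf : IsCoprime p q)
    (hdeg : max p.natDegree q.natDegree = d) (α : P1 K)
    (hrat : ∀ β : P1 (Kbar K), ratAct p q (Kbar K) β = P1K α → β ∈ P1Rat (K := K) ⊥)
    (Fs : Finset (P1 (Kbar K)))
    (hFs : ∀ β, β ∈ Fs ↔ ratAct p q (Kbar K) β = P1K α) (n : ℕ) :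
    Nat.card (Iset p q (P1K α) (n+1)) ≤ ∏ β ∈ Fs, Nat.card (Iset p q β n) := by
  set φ := ratAct p q (Kbar K) with hφ
  haveI hfinV : ∀ (a : P1 (Kbar K)) (k : ℕ), Finite (preV φ a k) :=
    fun a k => (preV_fin hd p q hf hdeg a k).1
  haveI : ∀ (a : P1 (Kbar K)) (m : ℕ), Finite (Iset p q a m) :=
    fun a m => Set.toFinite _ |>.to_subtype
  -- choose a Galois element representing each restriction
  have hσex : ∀ t : Iset p q (P1K α) (n+1), ∃ σ : Kbar K ≃ₐ[K] Kbar K,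
      ∀ (k : Fin (n+2)) (γ : preV φ (P1K α) k.1),
        ((t.1 k γ : P1 (Kbar K))) = galP1 σ γ.1 := by
    rintro ⟨t, g, hg, rfl⟩
    obtain ⟨σ, -, hσ⟩ := hg
    exact ⟨σ, fun k γ => hσ k.1 γ⟩
  choose σf hσf using hσex
  have hfix : ∀ (t : Iset p q (P1K α) (n+1)) (β : P1 (Kbar K)), β ∈ Fs →
      galP1 (σf t) β = β :=
    fun t β hβ => galP1_fix_of_rat (σf t) (hrat β ((hFs β).mp hβ))
  set Ψ : Iset p q (P1K α) (n+1) → ∀ β : Fs, Iset p q β.1 n :=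
    fun t β => ⟨Rmap φ β.1 n (fun k => gPerm p q (σf t) β.1 (hfix t β.1 β.2) k),
      fun k => gPerm p q (σf t) β.1 (hfix t β.1 β.2) k,
      gPerm_mem p q (σf t) β.1 (hfix t β.1 β.2), rfl⟩ with hΨ
  have hΨinj : Function.Injective Ψ := by
    intro t t' hE
    apply Subtype.ext
    funext k
    refine Fin.cases ?_ ?_ k
    · haveI : Subsingleton (preV φ (P1K α) ((0 : Fin (n+2)) : ℕ)) := by
        rw [Fin.val_zero]
        infer_instance
      exact Subsingleton.elim _ _
    · intro j
      apply Equiv.ext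
      intro γ
      apply Subtype.ext
      -- γ lies in the subtree above β := φ^[j] γ.1
      have hβ : φ ((φ^[j.1]) γ.1) = P1K α := by
        have h2 : φ^[j.1 + 1] γ.1 = P1K α := γ.2
        rw [Function.iterate_succ_apply'] at h2
        exact h2
      have hβFs : (φ^[j.1]) γ.1 ∈ Fs := (hFs _).mpr hβ
      set β : P1 (Kbar K) := (φ^[j.1]) γ.1 with hβdef
      have hγβ : (φ^[j.1]) γ.1 = β := rfl
      -- value of the component of Ψ at β on γ
      have hcomp : ∀ s : Iset p q (P1K α) (n+1),
          ((Ψ s ⟨β, hβFs⟩).1 ⟨j.1, j.2⟩ ⟨γ.1, hγβ⟩ : P1 (Kbar K)) = galP1 (σf s) γ.1 :=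
        fun s => rfl
      have heq : galP1 (σf t) γ.1 = galP1 (σf t') γ.1 := by
        rw [← hcomp t, ← hcomp t', hE]
      calc ((t.1 j.succ γ : P1 (Kbar K))) = galP1 (σf t) γ.1 := hσf t j.succ γ
        _ = galP1 (σf t') γ.1 := heq
        _ = ((t'.1 j.succ γ : P1 (Kbar K))) := (hσf t' j.succ γ).symm
  calc Nat.card (Iset p q (P1K α) (n+1))
      ≤ Nat.card (∀ β : Fs, Iset p q β.1 n) := Nat.card_le_card_of_injective Ψ hΨinj
    _ = ∏ β : Fs, Nat.card (Iset p q β.1 n) := Nat.card_pi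
    _ = ∏ β ∈ Fs, Nat.card (Iset p q β n) := Finset.prod_coe_sort Fs (fun b => Nat.card (Iset p q b n))

end CrossTree

section Analysis
variable {K : Type*} [Field K]

/-- The quantity whose `limsup` is `dimUpper`. -/
noncomputable def uFun (d : ℕ) (p q : Polynomial K) (a : P1 (Kbar K)) (n : ℕ) : ℝ :=
  Real.log ((coverNum d (arbGal (K := K) galP1 ⊥ (ratAct p q (Kbar K)) a) n : ℕ) : ℝ) /
    Real.log (1 / treeScale d n)

variable {d : ℕ}

lemma dimUpper_eq_limsup (p q : Polynomial K) (a : P1 (Kbar K)) :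
    dimUpper d (arbGal (K := K) galP1 ⊥ (ratAct p q (Kbar K)) a) =
      Filter.limsup (uFun d p q a) Filter.atTop := rfl

lemma coverNum_arbGal (hd : 2 ≤ d) (p q : Polynomial K) (hf : IsCoprime p q)
    (hdeg : max p.natDegree q.natDegree = d) (a : P1 (Kbar K)) (n : ℕ) :
    coverNum d (arbGal (K := K) galP1 ⊥ (ratAct p q (Kbar K)) a) n =
      Nat.card (Iset p q a n) := by
  haveI : ∀ k, Finite (preV (ratAct p q (Kbar K)) a k) :=
    fun k => (preV_fin hd p q hf hdeg a k).1
  exact coverNum_eq hd _ n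

lemma log_one_div_treeScale (n : ℕ) :
    Real.log (1 / treeScale d n) = (scaleExp d n : ℝ) * Real.log (d.factorial : ℝ) := by
  rw [treeScale, one_div, inv_inv, Real.log_pow]

lemma log_fact_pos (hd : 2 ≤ d) : 0 < Real.log (d.factorial : ℝ) :=
  Real.log_pos (one_lt_fact hd)

lemma uFun_nonneg (hd : 2 ≤ d) (p q : Polynomial K) (hf : IsCoprime p q)
    (hdeg : max p.natDegree q.natDegree = d) (a : P1 (Kbar K)) (n : ℕ) :
    0 ≤ uFun d p q a n := by
  apply div_nonneg
  · apply Real.log_nonneg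
    rw [coverNum_arbGal hd p q hf hdeg]
    exact_mod_cast Iset_card_pos hd p q hf hdeg a n
  · rw [log_one_div_treeScale]
    exact mul_nonneg (Nat.cast_nonneg _) (log_fact_pos hd).le

lemma uFun_bounded (hd : 2 ≤ d) (p q : Polynomial K) (hf : IsCoprime p q)
    (hdeg : max p.natDegree q.natDegree = d) (a : P1 (Kbar K)) (n : ℕ) :
    uFun d p q a n ≤ (d : ℝ) * Real.log d / Real.log (d.factorial : ℝ) := by
  have hC : 0 ≤ (d : ℝ) * Real.log d / Real.log (d.factorial : ℝ) := by
    apply div_nonneg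
    · exact mul_nonneg (Nat.cast_nonneg _) (Real.log_nonneg (by exact_mod_cast by omega : (1:ℝ) ≤ d))
    · exact (log_fact_pos hd).le
  rcases Nat.eq_zero_or_pos n with rfl | hn
  · rw [uFun, treeScale_zero]
    norm_num
    exact hC
  · have hs : 1 ≤ scaleExp d n := scaleExp_pos hd hn
    have hL := log_fact_pos hd
    have hnum : Real.log ((Nat.card (Iset p q a n) : ℝ)) ≤
        ((d * scaleExp d n : ℕ) : ℝ) * Real.log d := by
      have h1 : (Nat.card (Iset p q a n) : ℝ) ≤ ((d ^ (d * scaleExp d n) : ℕ) : ℝ) := by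
        exact_mod_cast Iset_card_le hd p q hf hdeg a n
      have h2 : (0:ℝ) < (Nat.card (Iset p q a n) : ℝ) := by
        exact_mod_cast Iset_card_pos hd p q hf hdeg a n
      calc Real.log _ ≤ Real.log ((d ^ (d * scaleExp d n) : ℕ) : ℝ) :=
            Real.log_le_log h2 h1
        _ = ((d * scaleExp d n : ℕ) : ℝ) * Real.log d := by
            rw [Nat.cast_pow, Real.log_pow]
    rw [uFun, coverNum_arbGal hd p q hf hdeg, log_one_div_treeScale]
    have hden : (0:ℝ) < (scaleExp d n : ℝ) * Real.log (d.factorial : ℝ) := by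
      apply mul_pos _ hL
      exact_mod_cast hs
    have hcast : ((d * scaleExp d n : ℕ) : ℝ) = (d:ℝ) * (scaleExp d n : ℝ) := by
      push_cast; ring
    have hs0 : (scaleExp d n : ℝ) ≠ 0 := by
      have : (0:ℝ) < (scaleExp d n : ℝ) := by exact_mod_cast hs
      exact ne_of_gt this
    calc Real.log ((Nat.card (Iset p q a n) : ℝ)) /
          ((scaleExp d n : ℝ) * Real.log (d.factorial : ℝ))
        ≤ (((d * scaleExp d n : ℕ) : ℝ) * Real.log d) /
          ((scaleExp d n : ℝ) * Real.log (d.factorial : ℝ)) := by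
          exact (div_le_div_iff_of_pos_right hden).mpr hnum
      _ = (d : ℝ) * Real.log d / Real.log (d.factorial : ℝ) := by
          rw [hcast]
          field_simp
end Analysis

section KeyIneq
variable {K : Type*} [Field K] {d : ℕ}

lemma scaleExp_mul_succ (d n : ℕ) : d * scaleExp d n + 1 = scaleExp d (n+1) := by
  induction n with
  | zero => simp [scaleExp]
  | succ n ih =>
    calc d * scaleExp d (n+1) + 1 = d * (scaleExp d n + d^n) + 1 := by rw [scaleExp_succ]
      _ = (d * scaleExp d n + 1) + d^(n+1) := by ring
      _ = scaleExp d (n+1) + d^(n+1) := by rw [ih]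
      _ = scaleExp d (n+1+1) := (scaleExp_succ d (n+1)).symm

lemma uFun_key (hd : 2 ≤ d) (p q : Polynomial K) (hf : IsCoprime p q)
    (hdeg : max p.natDegree q.natDegree = d) (α : P1 K)
    (hrat : ∀ β : P1 (Kbar K), ratAct p q (Kbar K) β = P1K α → β ∈ P1Rat (K := K) ⊥)
    (Fs : Finset (P1 (Kbar K)))
    (hFs : ∀ β, β ∈ Fs ↔ ratAct p q (Kbar K) β = P1K α) (n : ℕ) (hn : 1 ≤ n) :
    uFun d p q (P1K α) (n+1) ≤ (1/(d:ℝ)) * ∑ β ∈ Fs, uFun d p q β n := by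
  have hL := log_fact_pos hd
  have hs : 1 ≤ scaleExp d n := scaleExp_pos hd hn
  have hsR : (1:ℝ) ≤ (scaleExp d n : ℝ) := by exact_mod_cast hs
  set L : ℝ := Real.log (d.factorial : ℝ) with hLdef
  set c : P1 (Kbar K) → ℝ := fun β => (Nat.card (Iset p q β n) : ℝ) with hcdef
  have hc1 : ∀ β, (1:ℝ) ≤ c β := fun β => by
    simp only [hcdef]
    exact_mod_cast Iset_card_pos hd p q hf hdeg β n
  set cA : ℝ := (Nat.card (Iset p q (P1K α) (n+1)) : ℝ) with hcAdef
  have hcA1 : (1:ℝ) ≤ cA := by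
    simp only [hcAdef]
    exact_mod_cast Iset_card_pos hd p q hf hdeg (P1K α) (n+1)
  have hprod : cA ≤ ∏ β ∈ Fs, c β := by
    simp only [hcAdef, hcdef]
    rw [← Nat.cast_prod]
    exact_mod_cast Iset_card_cross hd p q hf hdeg α hrat Fs hFs n
  have hlogprod : Real.log (∏ β ∈ Fs, c β) = ∑ β ∈ Fs, Real.log (c β) :=
    Real.log_prod (s := Fs) (f := c) (fun β _ => by have := hc1 β; intro h; rw [h] at this; linarith)
  have hnum : Real.log cA ≤ ∑ β ∈ Fs, Real.log (c β) := by
    rw [← hlogprod]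
    exact Real.log_le_log (by linarith) hprod
  have hlognn : ∀ β ∈ Fs, 0 ≤ Real.log (c β) := fun β _ => Real.log_nonneg (hc1 β)
  have hsumnn : 0 ≤ ∑ β ∈ Fs, Real.log (c β) := Finset.sum_nonneg hlognn
  have hds : (d:ℝ) * (scaleExp d n : ℝ) ≤ (scaleExp d (n+1) : ℝ) := by
    have := scaleExp_mul_succ d n
    have h2 : d * scaleExp d n ≤ scaleExp d (n+1) := by omega
    exact_mod_cast h2
  have hdspos : (0:ℝ) < (d:ℝ) * (scaleExp d n : ℝ) * L := by
    apply mul_pos _ hL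
    apply mul_pos _ (by linarith : (0:ℝ) < (scaleExp d n : ℝ))
    exact_mod_cast (by omega : 0 < d)
  have hdenpos : (0:ℝ) < (scaleExp d (n+1) : ℝ) * L := by
    apply mul_pos _ hL
    have : 1 ≤ scaleExp d (n+1) := scaleExp_pos hd (by omega)
    exact_mod_cast (by omega : 0 < scaleExp d (n+1))
  have huA : uFun d p q (P1K α) (n+1) = Real.log cA / ((scaleExp d (n+1) : ℝ) * L) := by
    rw [uFun, coverNum_arbGal hd p q hf hdeg, log_one_div_treeScale]
  have hu : ∀ β, uFun d p q β n = Real.log (c β) / ((scaleExp d n : ℝ) * L) := fun β => by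
    rw [uFun, coverNum_arbGal hd p q hf hdeg, log_one_div_treeScale]
  rw [huA]
  have hd0 : (d:ℝ) ≠ 0 := by exact_mod_cast (by omega : d ≠ 0)
  have hs0 : (scaleExp d n : ℝ) ≠ 0 := by linarith
  have hL0 : L ≠ 0 := ne_of_gt hL
  calc Real.log cA / ((scaleExp d (n+1) : ℝ) * L)
      ≤ (∑ β ∈ Fs, Real.log (c β)) / ((scaleExp d (n+1) : ℝ) * L) :=
        (div_le_div_iff_of_pos_right hdenpos).mpr hnum
    _ ≤ (∑ β ∈ Fs, Real.log (c β)) / ((d:ℝ) * (scaleExp d n : ℝ) * L) :=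
        div_le_div_of_nonneg_left hsumnn hdspos
          (mul_le_mul_of_nonneg_right hds hL.le)
    _ = (1/(d:ℝ)) * ∑ β ∈ Fs, uFun d p q β n := by
        rw [Finset.sum_div, Finset.mul_sum]
        apply Finset.sum_congr rfl
        intro β _
        rw [hu β]
        ring

end KeyIneq

theorem arboreal_pullback_bound {K : Type*} [Field K] [NumberField K] {d : ℕ}
    (hd : 2 ≤ d) (p q : Polynomial K) (hf : IsCoprime p q)
    (hdeg : max p.natDegree q.natDegree = d) (α : P1 K)
    (hrat : ∀ β : P1 (Kbar K), ratAct p q (Kbar K) β = P1K α → β ∈ P1Rat (K := K) ⊥) :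
    dimUpper d (arbGal (K := K) galP1 ⊥ (ratAct p q (Kbar K)) (P1K α)) ≤
      (1 / (d : ℝ)) * ∑ᶠ β ∈ {β : P1 (Kbar K) | ratAct p q (Kbar K) β = P1K α},
        dimUpper d (arbGal (K := K) galP1 ⊥ (ratAct p q (Kbar K)) β) := by
  classical
  obtain ⟨T, hT, -⟩ := fiber_bound hd p q hf hdeg (P1K α)
  have hFfin : {β : P1 (Kbar K) | ratAct p q (Kbar K) β = P1K α}.Finite :=
    Set.Finite.subset T.finite_toSet (fun β hβ => hT β hβ)
  set Fs := hFfin.toFinset with hFsdef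
  have hFs : ∀ β, β ∈ Fs ↔ ratAct p q (Kbar K) β = P1K α := fun β => by
    rw [hFsdef, Set.Finite.mem_toFinset]
    rfl
  have hsum : ∑ᶠ β ∈ {β : P1 (Kbar K) | ratAct p q (Kbar K) β = P1K α},
      dimUpper d (arbGal (K := K) galP1 ⊥ (ratAct p q (Kbar K)) β)
      = ∑ β ∈ Fs, dimUpper d (arbGal (K := K) galP1 ⊥ (ratAct p q (Kbar K)) β) := by
    rw [← hFfin.coe_toFinset, finsum_mem_coe_finset]
  rw [hsum, dimUpper_eq_limsup]
  have hd0 : (0:ℝ) < (d : ℝ) := by exact_mod_cast (by omega : 0 < d)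
  have hboundA : ∀ a, Filter.IsBoundedUnder (· ≤ ·) Filter.atTop (uFun d p q a) :=
    fun a => ⟨(d:ℝ) * Real.log d / Real.log (d.factorial : ℝ),
      Filter.eventually_map.mpr (Filter.Eventually.of_forall
        (fun n => uFun_bounded hd p q hf hdeg a n))⟩
  have hcob : Filter.IsCoboundedUnder (· ≤ ·) Filter.atTop (uFun d p q (P1K α)) :=
    Filter.isCoboundedUnder_le_of_eventually_le Filter.atTop
      (Filter.Eventually.of_forall (fun n => uFun_nonneg hd p q hf hdeg (P1K α) n))
  apply le_of_forall_pos_le_add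
  intro ε hε
  set ε' : ℝ := ε * d / (Fs.card + 1) with hε'def
  have hε'pos : 0 < ε' := by
    rw [hε'def]
    positivity
  have hev : ∀ᶠ n in Filter.atTop, ∀ β ∈ Fs,
      uFun d p q β n < dimUpper d (arbGal (K := K) galP1 ⊥ (ratAct p q (Kbar K)) β) + ε' := by
    rw [Filter.eventually_all_finset]
    intro β hβ
    apply Filter.eventually_lt_of_limsup_lt _ (hboundA β)
    rw [← dimUpper_eq_limsup p q β]
    exact lt_add_of_pos_right _ hε'pos
  obtain ⟨N, hN⟩ := Filter.eventually_atTop.mp hev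
  have hkey : (1/(d:ℝ)) * ((Fs.card : ℝ) * ε') ≤ ε := by
    have hm : (Fs.card:ℝ)/((Fs.card : ℝ)+1) ≤ 1 := by
      rw [div_le_one (by positivity)]
      linarith
    calc (1/(d:ℝ)) * ((Fs.card : ℝ) * ε') = ε * ((Fs.card:ℝ)/((Fs.card : ℝ)+1)) := by
          rw [hε'def]
          field_simp
      _ ≤ ε * 1 := mul_le_mul_of_nonneg_left hm hε.le
      _ = ε := mul_one ε
  have hfinal : ∀ᶠ n in Filter.atTop, uFun d p q (P1K α) n ≤
      (1/(d:ℝ)) * ∑ β ∈ Fs, dimUpper d (arbGal (K := K) galP1 ⊥ (ratAct p q (Kbar K)) β)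
        + ε := by
    rw [Filter.eventually_atTop]
    refine ⟨N + 2, fun n hn => ?_⟩
    have h1 : n - 1 + 1 = n := by omega
    have h2 : 1 ≤ n - 1 := by omega
    have h3 : N ≤ n - 1 := by omega
    calc uFun d p q (P1K α) n = uFun d p q (P1K α) ((n-1)+1) := by rw [h1]
      _ ≤ (1/(d:ℝ)) * ∑ β ∈ Fs, uFun d p q β (n-1) :=
          uFun_key hd p q hf hdeg α hrat Fs hFs (n-1) h2
      _ ≤ (1/(d:ℝ)) * ∑ β ∈ Fs,
            (dimUpper d (arbGal (K := K) galP1 ⊥ (ratAct p q (Kbar K)) β) + ε') := by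
          apply mul_le_mul_of_nonneg_left _ (by positivity)
          apply Finset.sum_le_sum
          intro β hβ
          exact (hN (n-1) h3 β hβ).le
      _ = (1/(d:ℝ)) * ∑ β ∈ Fs, dimUpper d (arbGal (K := K) galP1 ⊥ (ratAct p q (Kbar K)) β)
            + (1/(d:ℝ)) * ((Fs.card : ℝ) * ε') := by
          rw [Finset.sum_add_distrib, mul_add, Finset.sum_const, nsmul_eq_mul]
      _ ≤ (1/(d:ℝ)) * ∑ β ∈ Fs, dimUpper d (arbGal (K := K) galP1 ⊥ (ratAct p q (Kbar K)) β)
            + ε := by linarith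
  exact Filter.limsup_le_of_le hcob hfinal
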